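/- Let M be a 3-connected matroid. If (X, {e}, Y) is a vertical 3-separation of M, then (X − cl(Y), {e}, cl(Y) − {e}) is also a vertical 3-separation of M. Dually, if (X, {e}, Y) is a cyclic 3-separation of M, then (X − cl*(Y), {e}, cl*(Y) − {e}) is also a cyclic 3-separation of M. -/

import Mathlib

open Set Matroid

namespace ElasticPaper

variable {α : Type*}

/-! ### Basic operations: deletion, contraction, minors, isomorphism -/

/-- The deletion `M \ D`. -/
def del (M : Matroid α) (D : Set α) : Matroid α := M ↾ (M.E \ D)

/-- The contraction `M / C`. -/
def con (M : Matroid α) (C : Set α) : Matroid α := (del M✶ C)✶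

/-- `N` is a minor of `M`. -/
def IsMinorOf (N M : Matroid α) : Prop := ∃ C D : Set α, N = del (con M C) D

/-- Isomorphism of matroids (on a common label type). -/
def Iso (M N : Matroid α) : Prop :=
  ∃ f : α → α, Set.BijOn f M.E N.E ∧ ∀ I ⊆ M.E, (M.Indep I ↔ N.Indep (f '' I))

/-- `M` has a minor isomorphic to `N`. -/
def HasMinorIso (M N : Matroid α) : Prop := ∃ N', IsMinorOf N' M ∧ Iso N N'

/-! ### Rank and connectivity -/

/-- The rank of a set, valued in `ℕ∞`. -/
noncomputable def eRk (M : Matroid α) (X : Set α) : ℕ∞ :=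
  ⨆ I ∈ {I : Set α | M.Indep I ∧ I ⊆ X}, I.encard

/-- The rank of a matroid. -/
noncomputable def eRank (M : Matroid α) : ℕ∞ := eRk M M.E

/-- `X` is `k`-separating in `M`, i.e. `λ(X) ≤ k - 1`. -/
def KSeparating (M : Matroid α) (k : ℕ) (X : Set α) : Prop :=
  eRk M X + eRk M (M.E \ X) + 1 ≤ eRank M + (k : ℕ∞)

/-- `X` is exactly `k`-separating in `M`, i.e. `λ(X) = k - 1`. -/
def ExactlyKSeparating (M : Matroid α) (k : ℕ) (X : Set α) : Prop :=
  eRk M X + eRk M (M.E \ X) + 1 = eRank M + (k : ℕ∞)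

/-- `(X, Y)` is a `k`-separation of `M`. -/
def KSeparation (M : Matroid α) (k : ℕ) (X Y : Set α) : Prop :=
  Disjoint X Y ∧ X ∪ Y = M.E ∧ KSeparating M k X ∧
    (k : ℕ∞) ≤ X.encard ∧ (k : ℕ∞) ≤ Y.encard

/-- `M` is `n`-connected: it has no `k`-separations for `k < n`. -/
def NConnected (M : Matroid α) (n : ℕ) : Prop :=
  ∀ k X Y, k < n → ¬ KSeparation M k X Y

/-- `M` is `3`-connected. -/
abbrev ThreeConnected (M : Matroid α) : Prop := NConnected M 3

/-- `(X, Y)` is a vertical `k`-separation of `M`. -/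
def VerticalKSeparation (M : Matroid α) (k : ℕ) (X Y : Set α) : Prop :=
  KSeparation M k X Y ∧ (k : ℕ∞) ≤ eRk M X ∧ (k : ℕ∞) ≤ eRk M Y

/-- `(X, {e}, Y)` is a vertical `3`-separation of `M`. -/
def Vertical3Sep (M : Matroid α) (X : Set α) (e : α) (Y : Set α) : Prop :=
  e ∉ X ∧ e ∉ Y ∧ Disjoint X Y ∧ X ∪ {e} ∪ Y = M.E ∧
  VerticalKSeparation M 3 (X ∪ {e}) Y ∧ VerticalKSeparation M 3 X (Y ∪ {e}) ∧
  e ∈ M.closure X ∧ e ∈ M.closure Y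

/-- `(X, {e}, Y)` is a cyclic `3`-separation of `M`. -/
def Cyclic3Sep (M : Matroid α) (X : Set α) (e : α) (Y : Set α) : Prop :=
  Vertical3Sep M✶ X e Y

/-- `Y ∪ {e}` is maximal among vertical 3-separations of `M`. -/
def VertMaximal (M : Matroid α) (e : α) (Y : Set α) : Prop :=
  ∀ X' : Set α, ∀ e' : α, ∀ Y' : Set α,
    Vertical3Sep M X' e' Y' → ¬ (Y ∪ {e} ⊂ Y' ∪ {e'})

/-! ### Circuits, fans -/

/-- A circuit is a minimal dependent set. -/
def Circuit (M : Matroid α) (C : Set α) : Prop := M.Dep C ∧ ∀ D, D ⊂ C → M.Indep D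

/-- A triangle is a 3-element circuit. -/
def Triangle (M : Matroid α) (T : Set α) : Prop := Circuit M T ∧ T.encard = 3

/-- A triad is a 3-element cocircuit. -/
def Triad (M : Matroid α) (T : Set α) : Prop := Circuit M✶ T ∧ T.encard = 3

/-- `f 0, f 1, …, f (k-1)` is a fan ordering in `M`. -/
def FanOrdering (M : Matroid α) (k : ℕ) (f : ℕ → α) : Prop :=
  3 ≤ k ∧ Set.InjOn f (Set.Iio k) ∧ (∀ i < k, f i ∈ M.E) ∧
  (∀ i, i + 2 < k →
    (Triangle M {f i, f (i+1), f (i+2)} ∨ Triad M {f i, f (i+1), f (i+2)})) ∧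
  (∀ i, i + 3 < k →
    (Triangle M {f i, f (i+1), f (i+2)} → Triad M {f (i+1), f (i+2), f (i+3)}) ∧
    (Triad M {f i, f (i+1), f (i+2)} → Triangle M {f (i+1), f (i+2), f (i+3)}))

/-- `F` is a fan of `M`. -/
def IsFan (M : Matroid α) (F : Set α) : Prop :=
  ∃ k f, FanOrdering M k f ∧ F = f '' (Set.Iio k)

/-- `M` has no 4-element fans. -/
def NoFourElementFan (M : Matroid α) : Prop := ¬ ∃ F, IsFan M F ∧ F.encard = 4

/-- A convenient ordering function for a 4-element fan. -/
def quad (a b c d : α) : ℕ → α :=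
  fun i => if i = 0 then a else if i = 1 then b else if i = 2 then c else d

/-! ### Simplification and cosimplification -/

/-- `e` is a nonloop of `M`. -/
def Nonloop (M : Matroid α) (e : α) : Prop := M.Indep {e}

/-- `S` is a simplification of `M`: the restriction of `M` to a transversal of the
parallel classes of `M`. -/
def IsSimplificationOf (S M : Matroid α) : Prop :=
  ∃ X : Set α, (∀ x ∈ X, Nonloop M x) ∧
    (∀ e, Nonloop M e → ∃! x, x ∈ X ∧ M.closure {x} = M.closure {e}) ∧
    S = M ↾ X

/-- `S` is a cosimplification of `M`. -/
def IsCosimplificationOf (S M : Matroid α) : Prop := IsSimplificationOf S✶ M✶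

/-- `si M` is 3-connected. -/
def SiConn3 (M : Matroid α) : Prop := ∀ S, IsSimplificationOf S M → ThreeConnected S

/-- `co M` is 3-connected. -/
def CoConn3 (M : Matroid α) : Prop := ∀ S, IsCosimplificationOf S M → ThreeConnected S

/-- `si M` has an `N`-minor. -/
def SiHasMinor (M N : Matroid α) : Prop := ∀ S, IsSimplificationOf S M → HasMinorIso S N

/-- `co M` has an `N`-minor. -/
def CoHasMinor (M N : Matroid α) : Prop := ∀ S, IsCosimplificationOf S M → HasMinorIso S N

/-! ### Elastic, N-elastic, N-revealing elements -/

/-- `e` is an elastic element of `M`. -/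
def Elastic (M : Matroid α) (e : α) : Prop :=
  e ∈ M.E ∧ SiConn3 (con M {e}) ∧ CoConn3 (del M {e})

/-- `e` is an `N`-elastic element of `M`. -/
def NElastic (M N : Matroid α) (e : α) : Prop :=
  Elastic M e ∧ SiHasMinor (con M {e}) N ∧ CoHasMinor (del M {e}) N

/-- `e` is an `N`-revealing element of `M`. -/
def NRevealing (M N : Matroid α) (e : α) : Prop :=
  e ∈ M.E ∧
    ((SiHasMinor (con M {e}) N ∧ ¬ SiConn3 (con M {e})) ∨
     (CoHasMinor (del M {e}) N ∧ ¬ CoConn3 (del M {e})))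

/-! ### Theta matroids and Theta-separators -/

/-- `M` is (isomorphic to) `Θ_n` or `Θ_n⁻`, with segment elements `W` and cosegment
elements `Z` (so `n = |Z|`). This is expressed by listing the circuits. -/
def ThetaParts (M : Matroid α) (W Z : Set α) : Prop :=
  M.E = W ∪ Z ∧ Disjoint W Z ∧ W.Finite ∧ Z.Finite ∧
  (W.ncard = Z.ncard ∨ W.ncard + 1 = Z.ncard) ∧
  ∃ f : α → α, Set.InjOn f W ∧ f '' W ⊆ Z ∧
    ∀ C, Circuit M C ↔
      ((C ⊆ W ∧ C.encard = 3) ∨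
       (∃ w ∈ W, C = insert w (Z \ {f w})) ∨
       (∃ w ∈ W, ∃ w' ∈ W, ∃ z ∈ Z, w ≠ w' ∧ z ≠ f w ∧ z ≠ f w' ∧
         C = insert w (insert w' (Z \ {z}))))

/-- `W ∪ Z` is a Θ-separator of `M`, where `W` is a rank-2 subset and `Z` a corank-2
subset of `E(M)`. -/
def ThetaSeparatorParts (M : Matroid α) (W Z : Set α) : Prop :=
  W ⊆ M.E ∧ Z ⊆ M.E ∧ 4 ≤ eRank M ∧ 4 ≤ eRank M✶ ∧
  eRk M W = 2 ∧ eRk M✶ Z = 2 ∧ 3 ≤ max W.ncard Z.ncard ∧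
  (ThetaParts (M ↾ (W ∪ Z)) W Z ∨ ThetaParts (M✶ ↾ (W ∪ Z)) Z W)

/-- `S` is a Θ-separator of `M`. -/
def ThetaSeparator (M : Matroid α) (S : Set α) : Prop :=
  ∃ W Z : Set α, S = W ∪ Z ∧ ThetaSeparatorParts M W Z

/-- `S` is a Θ-separator of `M` revealing the minor `N`. -/
def ThetaSeparatorRevealing (M N : Matroid α) (S : Set α) : Prop :=
  ∃ W Z : Set α, S = W ∪ Z ∧ W ⊆ M.E ∧ Z ⊆ M.E ∧ 4 ≤ eRank M ∧ 4 ≤ eRank M✶ ∧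
    eRk M W = 2 ∧ eRk M✶ Z = 2 ∧ 3 ≤ max W.ncard Z.ncard ∧
    ((ThetaParts (M ↾ (W ∪ Z)) W Z ∧ ∃ z ∈ Z, NRevealing M N z) ∨
     (ThetaParts (M✶ ↾ (W ∪ Z)) Z W ∧ ∃ w ∈ W, NRevealing M✶ N✶ w))

/-! ### Paths of 3-separations, path-width, sequential separations -/

/-- `M` has path-width three. -/
def PathWidthThree (M : Matroid α) : Prop :=
  ∃ (k : ℕ) (f : ℕ → α), Set.InjOn f (Set.Iio k) ∧ f '' (Set.Iio k) = M.E ∧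
    ∀ i ≤ k, KSeparating M 3 (f '' Set.Iio i)

/-- `(X, Y)` is a sequential 3-separation of `M`. -/
def SequentialThreeSeparation (M : Matroid α) (X Y : Set α) : Prop :=
  Disjoint X Y ∧ X ∪ Y = M.E ∧ ExactlyKSeparating M 3 X ∧
  ∃ U, (U = X ∨ U = Y) ∧ ∃ (k : ℕ) (f : ℕ → α), Set.InjOn f (Set.Iio k) ∧
    f '' (Set.Iio k) = U ∧ ∀ i ≤ k, KSeparating M 3 (f '' Set.Iio i)

/-! ### Flowers and M(K₄) -/

/-- `(P₁, P₂, P₃, P₄)` is a swirl-like flower of `M` with four petals. -/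
def SwirlLikeFlower4 (M : Matroid α) (P₁ P₂ P₃ P₄ : Set α) : Prop :=
  Disjoint P₁ P₂ ∧ Disjoint P₁ P₃ ∧ Disjoint P₁ P₄ ∧
  Disjoint P₂ P₃ ∧ Disjoint P₂ P₄ ∧ Disjoint P₃ P₄ ∧
  P₁ ∪ P₂ ∪ P₃ ∪ P₄ = M.E ∧
  2 ≤ P₁.encard ∧ 2 ≤ P₂.encard ∧ 2 ≤ P₃.encard ∧ 2 ≤ P₄.encard ∧
  KSeparating M 3 P₁ ∧ KSeparating M 3 P₂ ∧ KSeparating M 3 P₃ ∧ KSeparating M 3 P₄ ∧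
  KSeparating M 3 (P₁ ∪ P₂) ∧ KSeparating M 3 (P₂ ∪ P₃) ∧
  KSeparating M 3 (P₃ ∪ P₄) ∧ KSeparating M 3 (P₄ ∪ P₁) ∧
  eRk M P₁ + eRk M P₂ = eRk M (P₁ ∪ P₂) + 1 ∧
  eRk M P₂ + eRk M P₃ = eRk M (P₂ ∪ P₃) + 1 ∧
  eRk M P₃ + eRk M P₄ = eRk M (P₃ ∪ P₄) + 1 ∧
  eRk M P₄ + eRk M P₁ = eRk M (P₄ ∪ P₁) + 1 ∧
  eRk M P₁ + eRk M P₃ = eRk M (P₁ ∪ P₃) ∧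
  eRk M P₂ + eRk M P₄ = eRk M (P₂ ∪ P₄)

/-- `Q` is isomorphic to the cycle matroid `M(K₄)`. -/
def IsMK4 (Q : Matroid α) : Prop :=
  ∃ p q r s t u : α, ([p, q, r, s, t, u] : List α).Nodup ∧
    Q.E = {p, q, r, s, t, u} ∧
    ∀ C, Circuit Q C ↔
      C ∈ ({{p, q, s}, {p, r, t}, {q, r, u}, {s, t, u},
            {p, s, u, r}, {p, t, u, q}, {q, s, t, r}} : Set (Set α))

/-- `N` is isomorphic to the uniform matroid `U_{r,n}`. -/
def IsUnif (N : Matroid α) (r n : ℕ) : Prop :=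
  N.E.encard = (n : ℕ∞) ∧ ∀ I, N.Indep I ↔ I ⊆ N.E ∧ I.encard ≤ (r : ℕ∞)

/-! ### Fixed-basis notions -/

/-- `e` is removable with respect to the basis `B`. -/
def RemovableWrt (M : Matroid α) (B : Set α) (e : α) : Prop :=
  (e ∈ B ∧ SiConn3 (con M {e})) ∨ (e ∈ M.E \ B ∧ CoConn3 (del M {e}))

/-- `e` is `(N, B)`-robust. -/
def NBRobust (M N : Matroid α) (B : Set α) (e : α) : Prop :=
  (e ∈ B ∧ HasMinorIso (con M {e}) N) ∨ (e ∈ M.E \ B ∧ HasMinorIso (del M {e}) N)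

/-- `e` is `(N, B)`-strong. -/
def NBStrong (M N : Matroid α) (B : Set α) (e : α) : Prop :=
  (e ∈ B ∧ SiConn3 (con M {e}) ∧ SiHasMinor (con M {e}) N) ∨
  (e ∈ M.E \ B ∧ CoConn3 (del M {e}) ∧ CoHasMinor (del M {e}) N)


variable {M : Matroid α} {I J X Y : Set α} {e : α}

lemma encard_le_eRk (hI : M.Indep I) (hIX : I ⊆ X) : I.encard ≤ eRk M X :=
  le_iSup₂ (f := fun (J : Set α) (_ : J ∈ {I : Set α | M.Indep I ∧ I ⊆ X}) => J.encard)
    I ⟨hI, hIX⟩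

lemma eRk_eq_encard (hI : M.IsBasis' I X) : eRk M X = I.encard := by
  refine le_antisymm (iSup₂_le fun J hJ => ?_) (encard_le_eRk hI.indep hI.subset)
  obtain ⟨K, hK, hJK⟩ := hJ.1.subset_isBasis'_of_subset hJ.2
  calc J.encard ≤ K.encard := encard_mono hJK
    _ = I.encard := IsBase.encard_eq_encard_of_isBase
        (isBase_restrict_iff'.2 hK) (isBase_restrict_iff'.2 hI)

lemma eRk_mono (h : X ⊆ Y) : eRk M X ≤ eRk M Y :=
  iSup₂_le fun J hJ => encard_le_eRk hJ.1 (hJ.2.trans h)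

lemma eRk_le_encard (M : Matroid α) (X : Set α) : eRk M X ≤ X.encard :=
  iSup₂_le fun J hJ => encard_mono hJ.2

lemma eRk_le_eRank (M : Matroid α) (X : Set α) : eRk M X ≤ eRank M :=
  iSup₂_le fun J hJ => encard_le_eRk hJ.1 hJ.1.subset_ground

lemma eRank_ne_top [M.Finite] : eRank M ≠ ⊤ :=
  ((eRk_le_encard M M.E).trans_lt M.ground_finite.encard_lt_top).ne

lemma eRk_ne_top [M.Finite] : eRk M X ≠ ⊤ :=
  ((eRk_le_eRank M X).trans_lt (lt_top_iff_ne_top.2 eRank_ne_top)).ne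

lemma eRk_closure (M : Matroid α) (X : Set α) : eRk M (M.closure X) = eRk M X := by
  obtain ⟨I, hI⟩ := M.exists_isBasis' X
  rw [eRk_eq_encard hI, eRk_eq_encard hI.isBasis_closure_right.isBasis']

lemma eRk_eq_of_subset_closure (hXY : X ⊆ Y) (hYX : Y ⊆ M.closure X) :
    eRk M Y = eRk M X :=
  le_antisymm ((eRk_mono hYX).trans (eRk_closure M X).le) (eRk_mono hXY)

lemma eRk_empty (M : Matroid α) : eRk M (∅ : Set α) = 0 := by
  simpa using eRk_le_encard M ∅

lemma eRk_union_le (M : Matroid α) (X Y : Set α) :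
    eRk M (X ∪ Y) ≤ eRk M X + eRk M Y := by
  obtain ⟨I, hI⟩ := M.exists_isBasis' X
  obtain ⟨J, hJ, hIJ⟩ := hI.indep.subset_isBasis'_of_subset (hI.subset.trans subset_union_left)
  have hJI : J \ I ⊆ Y := by
    rintro x ⟨hxJ, hxI⟩
    rcases hJ.subset hxJ with hx | hx
    · exact absurd (hI.mem_of_insert_indep hx (hJ.indep.subset (insert_subset hxJ hIJ))) hxI
    · exact hx
  rw [eRk_eq_encard hJ, eRk_eq_encard hI, ← encard_diff_add_encard_of_subset hIJ, add_comm]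
  exact add_le_add le_rfl (encard_le_eRk (hJ.indep.subset diff_subset) hJI)

lemma eRk_insert_le (M : Matroid α) (e : α) (X : Set α) :
    eRk M (insert e X) ≤ eRk M X + 1 := by
  rw [insert_eq, union_comm]
  exact (eRk_union_le M X {e}).trans (add_le_add le_rfl (by simpa using eRk_le_encard M {e}))

lemma eRk_insert_of_mem_closure (he : e ∈ M.closure X) (hX : X ⊆ M.E) :
    eRk M (insert e X) = eRk M X :=
  eRk_eq_of_subset_closure (subset_insert e X)
    (insert_subset he (M.subset_closure X hX))

lemma eRk_insert_of_not_mem_closure (heE : e ∈ M.E) (he : e ∉ M.closure X) :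
    eRk M (insert e X) = eRk M X + 1 := by
  obtain ⟨I, hI⟩ := M.exists_isBasis' X
  have hcl : M.closure I = M.closure X := hI.closure_eq_closure
  have heI : e ∉ I := fun h => he (hcl ▸ M.subset_closure I hI.indep.subset_ground h)
  have hind : M.Indep (insert e I) :=
    (hI.indep.insert_indep_iff_of_notMem heI).2 ⟨heE, hcl ▸ he⟩
  refine le_antisymm (eRk_insert_le M e X) ?_
  have := encard_le_eRk hind (insert_subset_insert hI.subset)
  rwa [encard_insert_of_notMem heI, ← eRk_eq_encard hI] at this

lemma eRank_eq_encard_base {B : Set α} (hB : M.IsBase B) : eRank M = B.encard :=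
  eRk_eq_encard hB.isBasis_ground.isBasis'

lemma eRk_dual_add_eRank (hX : X ⊆ M.E) :
    eRk M✶ X + eRank M = X.encard + eRk M (M.E \ X) := by
  obtain ⟨J, hJ⟩ := M.exists_isBasis (M.E \ X) diff_subset
  obtain ⟨B, hB, hJB⟩ := hJ.indep.exists_isBase_superset
  have hJeq : J = B ∩ (M.E \ X) :=
    hJ.eq_of_subset_indep (hB.indep.inter_right _)
      (subset_inter hJB hJ.subset) inter_subset_right
  -- X \ B is a basis of X in the dual
  have hbasis : M✶.IsBasis (X \ B) X := by
    refine Indep.isBasis_of_forall_insert ?_ diff_subset ?_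
    · rw [dual_indep_iff_exists (diff_subset.trans hX)]
      exact ⟨B, hB, disjoint_sdiff_left⟩
    · rintro x ⟨hxX, hxB⟩
      have hxB' : x ∈ B := by
        by_contra hxB''
        exact hxB ⟨hxX, hxB''⟩
      rw [dep_iff]
      constructor
      · rw [dual_indep_iff_exists' , not_and]
        rintro - ⟨B', hB', hdisj⟩
        -- B' ⊆ closure (B \ {x})
        have hsub : B' ⊆ M.closure (B \ {x}) := by
          intro y hy
          have hyE : y ∈ M.E := hB'.subset_ground hy
          have hyx : y ∉ insert x (X \ B) := fun h => hdisj.ne_of_mem h hy rfl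
          have hynex : y ≠ x := fun h => hyx (by rw [h]; exact mem_insert x _)
          by_cases hyX : y ∈ X
          · have hyB : y ∈ B := by
              by_contra hyB'
              exact hyx (mem_insert_of_mem _ ⟨hyX, hyB'⟩)
            exact M.subset_closure (B \ {x})
              ((diff_subset).trans hB.subset_ground) ⟨hyB, hynex⟩
          · have : y ∈ M.E \ X := ⟨hyE, hyX⟩
            have : y ∈ M.closure J := hJ.subset_closure this
            refine M.closure_subset_closure ?_ this
            rw [hJeq]
            rintro z ⟨hzB, hzE, hzX⟩
            exact ⟨hzB, fun h => hzX (h ▸ hxX)⟩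
        have hEcl : M.E ⊆ M.closure (B \ {x}) := by
          rw [← hB'.closure_eq]
          exact closure_subset_closure_of_subset_closure hsub
        exact hB.indep.notMem_closure_diff_of_mem hxB' (hEcl (hX hxX))
      · exact insert_subset (hX hxX) (diff_subset.trans hX)
  have h1 : eRk M✶ X = (X \ B).encard := eRk_eq_encard hbasis.isBasis'
  have h2 : eRank M = B.encard := eRank_eq_encard_base hB
  have h3 : eRk M (M.E \ X) = J.encard := eRk_eq_encard hJ.isBasis'
  rw [h1, h2, h3]
  have hBsplit : (B \ X).encard + (B ∩ X).encard = B.encard := encard_diff_add_encard_inter B X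
  have hBX : B \ X = J := by
    rw [hJeq]
    ext z
    simp only [mem_diff, mem_inter_iff]
    exact ⟨fun h => ⟨h.1, hB.subset_ground h.1, h.2⟩, fun h => ⟨h.1, h.2.2⟩⟩
  have hXsplit : (X \ B).encard + (X ∩ B).encard = X.encard := encard_diff_add_encard_inter X B
  rw [← hBsplit, hBX, ← hXsplit, inter_comm X B]
  ring

lemma eRank_dual_add_eRank (M : Matroid α) : eRank M✶ + eRank M = M.E.encard := by
  have := eRk_dual_add_eRank (M := M) (X := M.E) le_rfl
  rw [diff_self, eRk_empty, add_zero] at this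
  exact this
  
lemma kSeparating_dual [M.Finite] (hX : X ⊆ M.E) {k : ℕ} :
    KSeparating M✶ k X ↔ KSeparating M k X := by
  have hfin := M.ground_finite
  have h1 := eRk_dual_add_eRank (M := M) hX
  have h2 := eRk_dual_add_eRank (M := M) (X := M.E \ X) diff_subset
  have h3 := eRank_dual_add_eRank M
  rw [diff_diff_cancel_left hX] at h2
  have h5 : (M.E \ X).encard + X.encard = M.E.encard := encard_diff_add_encard_of_subset hX
  unfold KSeparating
  simp only [dual_ground]
  lift eRk M✶ X to ℕ using eRk_ne_top with a
  lift eRk M✶ (M.E \ X) to ℕ using eRk_ne_top with b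
  lift eRk M X to ℕ using eRk_ne_top with c
  lift eRk M (M.E \ X) to ℕ using eRk_ne_top with d
  lift eRank M to ℕ using eRank_ne_top with R
  lift eRank M✶ to ℕ using eRank_ne_top with S
  lift X.encard to ℕ using (hfin.subset hX).encard_lt_top.ne with p
  lift (M.E \ X).encard to ℕ using (hfin.subset diff_subset).encard_lt_top.ne with q
  lift M.E.encard to ℕ using hfin.encard_lt_top.ne with t
  have h1' : a + R = p + d := by exact_mod_cast h1
  have h2' : b + R = q + c := by exact_mod_cast h2
  have h3' : S + R = t := by exact_mod_cast h3
  have h5' : q + p = t := by exact_mod_cast h5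
  constructor <;> intro h
  · have hh : a + b + 1 ≤ S + k := by exact_mod_cast h
    exact_mod_cast (show c + d + 1 ≤ R + k by omega)
  · have hh : c + d + 1 ≤ R + k := by exact_mod_cast h
    exact_mod_cast (show a + b + 1 ≤ S + k by omega)
  
lemma exists_nat_eq {x : ℕ∞} (h : x ≠ ⊤) : ∃ n : ℕ, x = n :=
  ⟨x.toNat, (ENat.coe_toNat h).symm⟩

lemma conn_lower [M.Finite] (hM : ThreeConnected M) {A : Set α} (hA : A ⊆ M.E) {k : ℕ}
    (hk : k < 3) (h1 : (k : ℕ∞) ≤ A.encard) (h2 : (k : ℕ∞) ≤ (M.E \ A).encard) :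
    eRank M + (k : ℕ∞) ≤ eRk M A + eRk M (M.E \ A) := by
  have h := hM k A (M.E \ A) hk
  have hns : ¬ KSeparating M k A := fun hs =>
    h ⟨disjoint_sdiff_right, union_diff_cancel hA, hs, h1, h2⟩
  rw [KSeparating, not_le] at hns
  exact (ENat.lt_add_one_iff (WithTop.add_ne_top.2 ⟨eRk_ne_top, eRk_ne_top⟩)).1 hns

lemma vert3 [M.Finite] (hM : ThreeConnected M) {X Y : Set α} {e : α}
    (h : Vertical3Sep M X e Y) :
    Vertical3Sep M (X \ M.closure Y) e (M.closure Y \ {e}) := by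
  obtain ⟨heX, heY, hdXY, hE, hV1, hV2, hecX, hecY⟩ := h
  obtain ⟨⟨hd1, hu1, hs1, hc1X, hc1Y⟩, hr1X, hr1Y⟩ := hV1
  obtain ⟨⟨hd2, hu2, hs2, hc2X, hc2Y⟩, hr2X, hr2Y⟩ := hV2
  have hXE : X ⊆ M.E := by rw [← hu2]; exact subset_union_left
  have hYE : Y ⊆ M.E := by rw [← hu1]; exact subset_union_right
  have heE : e ∈ M.E := by rw [← hu1]; exact Or.inl (Or.inr rfl)
  set C := M.closure Y with hCdef
  have hCE : C ⊆ M.E := M.closure_subset_ground Y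
  have hYC : Y ⊆ C := M.subset_closure Y hYE
  have heC : e ∈ C := hecY
  set X' := X \ C with hX'def
  set Y' := C \ {e} with hY'def
  have hX'E : X' ⊆ M.E := diff_subset.trans hXE
  have hXC : X' = M.E \ C := by
    ext x
    simp only [hX'def, mem_diff]
    constructor
    · rintro ⟨hx, hxc⟩; exact ⟨hXE hx, hxc⟩
    · rintro ⟨hx, hxc⟩
      rw [← hE] at hx
      rcases hx with (hx | hx) | hx
      · exact ⟨hx, hxc⟩
      · exact absurd (hx ▸ heC : x ∈ C) hxc
      · exact absurd (hYC hx) hxc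
  have hECX : M.E \ X' = C := by rw [hXC, diff_diff_cancel_left hCE]
  -- rank facts
  have hrC : eRk M C = eRk M Y := eRk_closure M Y
  have hrY' : eRk M Y' = eRk M Y :=
    eRk_eq_of_subset_closure (subset_diff_singleton hYC heY) diff_subset
  have hrYe : eRk M (Y ∪ {e}) = eRk M Y :=
    eRk_eq_of_subset_closure subset_union_left
      (union_subset (M.subset_closure Y hYE) (singleton_subset_iff.2 hecY))
  have hrXe : eRk M (X ∪ {e}) = eRk M X :=
    eRk_eq_of_subset_closure subset_union_left
      (union_subset (M.subset_closure X hXE) (singleton_subset_iff.2 hecX))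
  have hEX : M.E \ X = Y ∪ {e} := by
    rw [← hu2, union_diff_cancel_left hd2.inter_eq.le]
  have hEXe : M.E \ (X ∪ {e}) = Y := by
    rw [← hu1, union_diff_cancel_left hd1.inter_eq.le]
  have hC3 : ((3:ℕ) : ℕ∞) ≤ C.encard := le_trans hc1Y (encard_mono hYC)
  have hC2 : ((2:ℕ) : ℕ∞) ≤ C.encard := le_trans (by norm_cast) hC3
  have hC1 : ((1:ℕ) : ℕ∞) ≤ C.encard := le_trans (by norm_cast) hC3
  -- numeric facts
  obtain ⟨nR, hnR⟩ := exists_nat_eq (eRank_ne_top (M := M))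
  obtain ⟨nX, hnX⟩ := exists_nat_eq (eRk_ne_top (M := M) (X := X))
  obtain ⟨nY, hnY⟩ := exists_nat_eq (eRk_ne_top (M := M) (X := Y))
  obtain ⟨nX', hnX'⟩ := exists_nat_eq (eRk_ne_top (M := M) (X := X'))
  have hup : nX + nY + 1 ≤ nR + 3 := by
    have h := hs2
    rw [KSeparating, hEX, hrYe, hnX, hnY, hnR] at h
    exact_mod_cast h
  have hlow : nR + 2 ≤ nX + nY := by
    have h := conn_lower hM (A := X ∪ {e}) (by rw [← hu1]; exact subset_union_left)
      (k := 2) (by norm_num) (le_trans (by norm_cast) hc1X)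
      (by rw [hEXe]; exact le_trans (by norm_cast) hc1Y)
    rw [hEXe, hrXe, hnX, hnY, hnR] at h
    exact_mod_cast h
  have h3X : 3 ≤ nX := by rw [hnX] at hr2X; exact_mod_cast hr2X
  have h3Y : 3 ≤ nY := by rw [hnY] at hr1Y; exact_mod_cast hr1Y
  have hX'X : nX' ≤ nX := by
    have := eRk_mono (M := M) (diff_subset (s := X) (t := C))
    rw [hnX, hnX'] at this; exact_mod_cast this
  -- r(X') ≥ 3
  have h3X' : 3 ≤ nX' := by
    by_contra hcon
    push_neg at hcon
    rcases eq_empty_or_nonempty X' with hemp | hne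
    · have hEC : M.E ⊆ C := by
        have : M.E \ C = ∅ := by rw [← hXC, hemp]
        exact diff_eq_empty.1 this
      have hRY : nR ≤ nY := by
        have : eRank M ≤ eRk M Y := by
          rw [← hrC]; exact eRk_mono hEC
        rw [hnR, hnY] at this; exact_mod_cast this
      omega
    · by_cases h2c : (2 : ℕ∞) ≤ X'.encard
      · have hcl := conn_lower hM hX'E (k := 2) (by norm_num)
          (by exact_mod_cast h2c) (by rw [hECX]; exact hC2)
        rw [hECX, hrC, hnR, hnX', hnY] at hcl
        have hcl' : nR + 2 ≤ nX' + nY := by exact_mod_cast hcl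
        omega
      · have h1c : (1 : ℕ∞) ≤ X'.encard := one_le_encard_iff_nonempty.2 hne
        have hcl := conn_lower hM hX'E (k := 1) (by norm_num)
          (by exact_mod_cast h1c) (by rw [hECX]; exact hC1)
        rw [hECX, hrC, hnR, hnX', hnY] at hcl
        have hcl' : nR + 1 ≤ nX' + nY := by exact_mod_cast hcl
        have hX1 : nX' ≤ 1 := by
          have hlt : X'.encard < 2 := not_le.1 h2c
          have hle : X'.encard ≤ 1 := by
            rw [show (2 : ℕ∞) = 1 + 1 from rfl] at hlt
            exact (ENat.lt_add_one_iff (by norm_num)).1 hlt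
          have := (eRk_le_encard M X').trans hle
          rw [hnX'] at this; exact_mod_cast this
        omega
  have hr3 : ((3:ℕ) : ℕ∞) ≤ eRk M X' := by rw [hnX']; exact_mod_cast h3X'
  have hcard3 : ((3:ℕ) : ℕ∞) ≤ X'.encard := hr3.trans (eRk_le_encard M X')
  -- e ∈ closure X'
  have hecX' : e ∈ M.closure X' := by
    by_contra hcon
    have hins := eRk_insert_of_not_mem_closure heE hcon
    have hmono : eRk M (insert e X') ≤ eRk M X := by
      refine le_trans (eRk_mono ?_) (le_of_eq hrXe)
      exact insert_subset (Or.inr rfl) (diff_subset.trans subset_union_left)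
    have hm' : nX' + 1 ≤ nX := by
      rw [hins, hnX', hnX] at hmono; exact_mod_cast hmono
    have hcl := conn_lower hM hX'E (k := 2) (by norm_num)
      (le_trans (by norm_cast) hcard3) (by rw [hECX]; exact hC2)
    rw [hECX, hrC, hnR, hnX', hnY] at hcl
    have hcl' : nR + 2 ≤ nX' + nY := by exact_mod_cast hcl
    omega
  -- assembly
  have hY'Y : Y ⊆ Y' := subset_diff_singleton hYC heY
  have heX' : e ∉ X' := fun h => h.2 heC
  have heY' : e ∉ Y' := fun h => h.2 rfl
  have hdisj : Disjoint X' Y' := disjoint_sdiff_left.mono_right diff_subset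
  have hCe : Y' ∪ {e} = C := by
    rw [hY'def, union_comm, union_diff_cancel (singleton_subset_iff.2 heC)]
  have hunion : X' ∪ {e} ∪ Y' = M.E := by
    rw [union_assoc, union_comm {e} Y', hCe, hXC, diff_union_of_subset hCE]
  have hEsplit : M.E \ (X' ∪ {e}) = Y' := by
    rw [← hunion, union_diff_cancel_left]
    rintro x ⟨hx, hx'⟩
    rcases hx with hx | hx
    · exact hdisj.ne_of_mem hx hx' rfl
    · exact heY' (hx ▸ hx')
  have hrX'e : eRk M (X' ∪ {e}) = eRk M X' := by
    rw [union_singleton, eRk_insert_of_mem_closure hecX' hX'E]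
  have hksepX' : eRk M X' + eRk M Y + 1 ≤ eRank M + ((3 : ℕ) : ℕ∞) := by
    rw [hnX', hnY, hnR]
    exact_mod_cast (by omega : nX' + nY + 1 ≤ nR + 3)
  refine ⟨heX', heY', hdisj, hunion, ⟨⟨?_, hunion, ?_, ?_, ?_⟩, ?_, ?_⟩,
    ⟨⟨?_, ?_, ?_, ?_, ?_⟩, ?_, ?_⟩, hecX', ?_⟩
  · exact (disjoint_union_left).2 ⟨hdisj, disjoint_singleton_left.2 heY'⟩
  · rw [KSeparating, hEsplit, hrX'e, hrY']; exact hksepX'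
  · exact le_trans hcard3 (encard_mono subset_union_left)
  · exact le_trans hc1Y (encard_mono hY'Y)
  · rw [hrX'e]; exact hr3
  · rw [hrY']; exact hr1Y
  · rw [hCe]; exact disjoint_sdiff_left
  · rw [hCe, hXC]; exact diff_union_of_subset hCE
  · rw [KSeparating, hECX, hrC]; exact hksepX'
  · exact hcard3
  · rw [hCe]; exact le_trans hc1Y (encard_mono hYC)
  · exact hr3
  · rw [hCe, hrC]; exact hr1Y
  · exact M.closure_subset_closure hY'Y hecY


lemma nConnected_dual [M.Finite] {n : ℕ} (h : NConnected M n) : NConnected M✶ n := by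
  intro k A B hk hsep
  obtain ⟨hd, hu, hs, h1, h2⟩ := hsep
  have hu' : A ∪ B = M.E := hu.trans (dual_ground (M := M))
  have hA : A ⊆ M.E := by rw [← hu']; exact subset_union_left
  exact h k A B hk ⟨hd, hu', (kSeparating_dual hA).1 hs, h1, h2⟩

/-- Lemma 2.6. -/
theorem statement_18 {α : Type*} (M : Matroid α) [M.Finite]
    (hM : ThreeConnected M) (X Y : Set α) (e : α) :
    (Vertical3Sep M X e Y →
      Vertical3Sep M (X \ M.closure Y) e (M.closure Y \ {e})) ∧
    (Cyclic3Sep M X e Y →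
      Cyclic3Sep M (X \ M✶.closure Y) e (M✶.closure Y \ {e})) := by
  constructor
  · exact fun h => vert3 hM h
  · intro h
    exact vert3 (M := M✶) (nConnected_dual hM) h

end ElasticPaper
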